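/- Let W be the Coxeter group of type A_{2m+1} (m ≥ 1) with generators s_1,…,s_{2m+1}, acting on its canonical root system Φ, and let g be the diagram automorphism with g(s_i) = s_{2m+2-i}. Let W^g be the subgroup of W fixed by g. Then every root in Φ lies in the W^g-orbit of α_m or of α_{m+1}, i.e., Φ = W^g·α_m ∪ W^g·α_{m+1}. -/

import Mathlib

open Real

/-- A Coxeter matrix on the set `S`, with `0` representing the label `∞`. -/
structure CoxeterMat (S : Type*) where
  m : S → S → ℕ
  diagonal : ∀ s, m s s = 1
  symmetric : ∀ s t, m s t = m t s
  off_diagonal : ∀ s t, s ≠ t → m s t ≠ 1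

namespace CoxeterMat

variable {S : Type*} (M : CoxeterMat S)

/-- The coefficient `⟨α_s, α_t⟩ = -2 cos (π / m_{s,t})`, with value `-2` when `m_{s,t} = ∞`. -/
noncomputable def c (s t : S) : ℝ :=
  if M.m s t = 0 then -2 else -2 * Real.cos (Real.pi / (M.m s t : ℝ))

/-- The simple root `α_s` in `V = ⊕_{s ∈ S} ℝ α_s`. -/
noncomputable def sroot (s : S) : S →₀ ℝ := Finsupp.single s 1

/-- The canonical bilinear form of the Coxeter graph. -/
noncomputable def bform : (S →₀ ℝ) →ₗ[ℝ] (S →₀ ℝ) →ₗ[ℝ] ℝ :=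
  Finsupp.lift _ ℝ S fun s => Finsupp.lift ℝ ℝ S fun t => M.c s t

/-- The simple reflection `σ_s : x ↦ x - ⟨α_s, x⟩ α_s`. -/
noncomputable def sigma (s : S) : (S →₀ ℝ) →ₗ[ℝ] (S →₀ ℝ) :=
  LinearMap.id - (M.bform (sroot s)).smulRight (sroot s)

/-- The Coxeter group `W`, realized as the subgroup of linear automorphisms of `V`
generated by the simple reflections. -/
noncomputable def Wgrp : Subgroup ((S →₀ ℝ) ≃ₗ[ℝ] (S →₀ ℝ)) :=
  Subgroup.closure {w | ∃ s : S, (w : (S →₀ ℝ) →ₗ[ℝ] (S →₀ ℝ)) = M.sigma s}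

/-- The canonical root system `Φ = {w(α_s) | w ∈ W, s ∈ S}`. -/
def Phi : Set (S →₀ ℝ) := {b | ∃ w ∈ M.Wgrp, ∃ s : S, b = w (sroot s)}

/-- The set of positive roots. -/
def PhiPos : Set (S →₀ ℝ) := {b | b ∈ M.Phi ∧ ∀ s, 0 ≤ b s}

/-- The equivalence relation `≡` on `Φ` generated by `α ≡₁ β ⟺ ⟨α, β⟩ ∉ {0, 1, -1}`. -/
def equivR : (S →₀ ℝ) → (S →₀ ℝ) → Prop :=
  Relation.EqvGen (fun a b => a ∈ M.Phi ∧ b ∈ M.Phi ∧ M.bform a b ∉ ({0, 1, -1} : Set ℝ))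

/-- The underlying graph of the Coxeter graph: `s` and `t` are joined iff `m_{s,t} ≥ 3`
(including `m_{s,t} = ∞`). -/
def graph : SimpleGraph S where
  Adj s t := s ≠ t ∧ M.m s t ≠ 2
  symm := ⟨fun s t h => ⟨h.1.symm, by rw [M.symmetric]; exact h.2⟩⟩
  loopless := ⟨fun s h => h.1 rfl⟩

/-- The action of a permutation of `S` on `V`. -/
noncomputable def permV (g : Equiv.Perm S) : (S →₀ ℝ) ≃ₗ[ℝ] (S →₀ ℝ) :=
  Finsupp.domLCongr g

/-- The set of elements of `W` fixed by the group `G` of symmetries (acting by conjugation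
by the corresponding permutations of coordinates). -/
noncomputable def WfixG (G : Subgroup (Equiv.Perm S)) :
    Set ((S →₀ ℝ) ≃ₗ[ℝ] (S →₀ ℝ)) :=
  {w | w ∈ M.Wgrp ∧ ∀ g ∈ G, permV g * w = w * permV g}

/-- Construct a simply laced Coxeter matrix from an adjacency relation. -/
noncomputable def ofAdj (A : S → S → Prop) (hs : ∀ s t, A s t → A t s)
    (hi : ∀ s, ¬ A s s) : CoxeterMat S where
  m s t := open Classical in if s = t then 1 else if A s t then 3 else 2
  diagonal s := by simp
  symmetric s t := by
    classical
    by_cases h : s = t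
    · subst h; rfl
    · have h' : t ≠ s := Ne.symm h
      simp only [if_neg h, if_neg h']
      by_cases hA : A s t
      · rw [if_pos hA, if_pos (hs s t hA)]
      · rw [if_neg hA, if_neg (fun h2 => hA (hs t s h2))]
  off_diagonal s t h := by
    classical
    simp only [if_neg h]
    split <;> norm_num

/-- Isomorphism of Coxeter graphs. -/
def Iso {T : Type*} (M : CoxeterMat S) (N : CoxeterMat T) : Prop :=
  ∃ e : S ≃ T, ∀ s t, N.m (e s) (e t) = M.m s t

/-- The full Coxeter subgraph spanned by `Y ⊆ S`. -/
def restrict (Y : Set S) : CoxeterMat Y where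
  m s t := M.m s t
  diagonal s := M.diagonal s
  symmetric s t := M.symmetric s t
  off_diagonal s t h := M.off_diagonal s t (fun hh => h (Subtype.ext hh))

end CoxeterMat

open CoxeterMat

/-- The Coxeter graph `A_n`: a path with `n` vertices. -/
noncomputable def pathA (n : ℕ) : CoxeterMat (Fin n) :=
  ofAdj (fun i j => i.val + 1 = j.val ∨ j.val + 1 = i.val)
    (fun _ _ h => h.symm)
    (fun s h => by rcases h with h | h <;> omega)

/-- The Coxeter graph `D_n`: a path `0 — 1 — ⋯ — (n-2)` together with an extra vertex `n-1`
joined to `n-3`. -/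
noncomputable def Dmat (n : ℕ) : CoxeterMat (Fin n) :=
  ofAdj (fun i j => i ≠ j ∧
      (((i.val + 1 = j.val ∧ j.val ≤ n - 2) ∨ (i.val + 2 = j.val ∧ j.val = n - 1)) ∨
       ((j.val + 1 = i.val ∧ i.val ≤ n - 2) ∨ (j.val + 2 = i.val ∧ i.val = n - 1))))
    (fun _ _ h => ⟨h.1.symm, h.2.symm⟩)
    (fun s h => h.1 rfl)

/-- Adjacency relation determined by a list of edges. -/
def listAdj {n : ℕ} (L : List (Fin n × Fin n)) (i j : Fin n) : Prop :=
  (i, j) ∈ L ∨ (j, i) ∈ L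

instance {n : ℕ} (L : List (Fin n × Fin n)) (i j : Fin n) : Decidable (listAdj L i j) := by
  unfold listAdj; infer_instance

/-- The Coxeter graph `E₆`. -/
noncomputable def E6mat : CoxeterMat (Fin 6) :=
  ofAdj (listAdj [(0,2),(2,3),(3,4),(4,5),(1,3)])
    (fun _ _ h => h.symm) (by decide)

/-- The Coxeter graph `E₇`. -/
noncomputable def E7mat : CoxeterMat (Fin 7) :=
  ofAdj (listAdj [(0,2),(2,3),(3,4),(4,5),(5,6),(1,3)])
    (fun _ _ h => h.symm) (by decide)

/-- The Coxeter graph `E₈`. -/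
noncomputable def E8mat : CoxeterMat (Fin 8) :=
  ofAdj (listAdj [(0,2),(2,3),(3,4),(4,5),(5,6),(6,7),(1,3)])
    (fun _ _ h => h.symm) (by decide)

/-- The Coxeter graph `A_∞`: the one-sided infinite path. -/
noncomputable def Ainf : CoxeterMat ℕ :=
  ofAdj (fun i j => i + 1 = j ∨ j + 1 = i)
    (fun _ _ h => h.symm)
    (fun s h => by omega)

/-- The Coxeter graph `_∞A_∞`: the two-sided infinite path. -/
noncomputable def ZAinf : CoxeterMat ℤ :=
  ofAdj (fun i j => i + 1 = j ∨ j + 1 = i)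
    (fun _ _ h => h.symm)
    (fun s h => by omega)

/-- The Coxeter graph `D_∞`: vertices `0, 1, 2, 3, …` with `0` and `1` joined to `2` and a
path `2 — 3 — 4 — ⋯`. -/
noncomputable def Dinf : CoxeterMat ℕ :=
  ofAdj (fun i j => i ≠ j ∧
      (((i = 0 ∧ j = 2) ∨ (i = 1 ∧ j = 2) ∨ (i + 1 = j ∧ 2 ≤ i)) ∨
       ((j = 0 ∧ i = 2) ∨ (j = 1 ∧ i = 2) ∨ (j + 1 = i ∧ 2 ≤ j))))
    (fun _ _ h => ⟨h.1.symm, h.2.symm⟩)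
    (fun s h => h.1 rfl)

/-- The affine Coxeter graph `Ã_n`: a cycle with `n + 1` vertices. -/
noncomputable def affA (n : ℕ) : CoxeterMat (ZMod (n + 1)) :=
  ofAdj (fun i j => i ≠ j ∧ (i + 1 = j ∨ j + 1 = i))
    (fun _ _ h => ⟨h.1.symm, h.2.symm⟩)
    (fun s h => h.1 rfl)

/-- The affine Coxeter graph `D̃_n` (on `n + 1` vertices, Bourbaki numbering): `0` and `1`
joined to `2`, a path `2 — 3 — ⋯ — (n-1)`, and `n` joined to `n-2`. -/
noncomputable def affD (n : ℕ) : CoxeterMat (Fin (n + 1)) :=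
  ofAdj (fun i j => i ≠ j ∧
      (((i.val = 0 ∧ j.val = 2) ∨ (i.val = 1 ∧ j.val = 2) ∨
        (i.val + 1 = j.val ∧ 2 ≤ i.val ∧ i.val ≤ n - 2) ∨
        (i.val = n - 2 ∧ j.val = n)) ∨
       ((j.val = 0 ∧ i.val = 2) ∨ (j.val = 1 ∧ i.val = 2) ∨
        (j.val + 1 = i.val ∧ 2 ≤ j.val ∧ j.val ≤ n - 2) ∨
        (j.val = n - 2 ∧ i.val = n))))
    (fun _ _ h => ⟨h.1.symm, h.2.symm⟩)
    (fun s h => h.1 rfl)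

/-- The affine Coxeter graph `Ẽ₆` (Bourbaki numbering, affine vertex `0`). -/
noncomputable def affE6 : CoxeterMat (Fin 7) :=
  ofAdj (listAdj [(1,3),(3,4),(4,5),(5,6),(2,4),(0,2)])
    (fun _ _ h => h.symm) (by decide)

/-- The affine Coxeter graph `Ẽ₇` (Bourbaki numbering, affine vertex `0`). -/
noncomputable def affE7 : CoxeterMat (Fin 8) :=
  ofAdj (listAdj [(0,1),(1,3),(3,4),(4,5),(5,6),(6,7),(2,4)])
    (fun _ _ h => h.symm) (by decide)

/-- The affine Coxeter graph `Ẽ₈` (Bourbaki numbering, affine vertex `0`). -/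
noncomputable def affE8 : CoxeterMat (Fin 9) :=
  ofAdj (listAdj [(1,3),(3,4),(4,5),(5,6),(6,7),(7,8),(2,4),(0,8)])
    (fun _ _ h => h.symm) (by decide)

section Dev
variable (m : ℕ)

lemma hm1 : m - 1 < 2*m+1 := by omega

noncomputable abbrev MA (m : ℕ) : CoxeterMat (Fin (2*m+1)) := pathA (2*m+1)

lemma pathA_m (s t : Fin (2*m+1)) :
    (MA m).m s t = if s = t then 1 else if (s.val + 1 = t.val ∨ t.val + 1 = s.val) then 3 else 2 := by
  simp only [MA, pathA, CoxeterMat.ofAdj]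
  split_ifs <;> tauto

lemma c_eval (s t : Fin (2*m+1)) :
    (MA m).c s t = if s = t then 2 else if (s.val + 1 = t.val ∨ t.val + 1 = s.val) then -1 else 0 := by
  rw [CoxeterMat.c, pathA_m]
  split_ifs with h1 h2 <;>
    simp_all [Real.cos_pi, Real.cos_pi_div_three, Real.cos_pi_div_two] <;>
    norm_num [Real.cos_pi, Real.cos_pi_div_three, Real.cos_pi_div_two]
open Finsupp in
noncomputable def rt (m i j : ℕ) : Fin (2*m+1) →₀ ℝ :=
  ∑ k : Fin (2*m+1), if i ≤ k.val ∧ k.val ≤ j then Finsupp.single k 1 else 0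

lemma rt_apply (i j : ℕ) (k : Fin (2*m+1)) :
    rt m i j k = if i ≤ k.val ∧ k.val ≤ j then 1 else 0 := by
  classical
  rw [rt, Finsupp.finset_sum_apply]
  rw [Finset.sum_eq_single k]
  · split_ifs <;> simp
  · intro l _ hl
    simp only [apply_ite (fun f : Fin (2*m+1) →₀ ℝ => f k), Finsupp.single_apply,
      Finsupp.coe_zero, Pi.zero_apply]
    simp [hl]
  · simp

lemma bform_sroot (t : Fin (2*m+1)) (x : Fin (2*m+1) →₀ ℝ) :
    (MA m).bform (CoxeterMat.sroot t) x = ∑ k : Fin (2*m+1), x k * (MA m).c t k := by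
  classical
  rw [CoxeterMat.bform, CoxeterMat.sroot]
  rw [Finsupp.lift_apply, Finsupp.sum_single_index (by simp)]
  simp only [one_smul]
  rw [Finsupp.lift_apply, Finsupp.sum_fintype]
  · simp [smul_eq_mul]
  · simp
lemma sum_ite_fin (N a : ℕ) (v : ℝ) :
    ∑ k : Fin N, (if k.val = a then v else 0) = if a < N then v else 0 := by
  rw [Fin.sum_univ_eq_sum_range (fun k => if k = a then v else 0)]
  simp [Finset.sum_ite_eq', Finset.mem_range]

lemma bform_rt (t : Fin (2*m+1)) (i j : ℕ) (hj : j ≤ 2*m) :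
    (MA m).bform (CoxeterMat.sroot t) (rt m i j) =
      (if i + 1 ≤ t.val ∧ t.val ≤ j + 1 then (-1:ℝ) else 0)
      + (if i ≤ t.val ∧ t.val ≤ j then 2 else 0)
      + (if i ≤ t.val + 1 ∧ t.val + 1 ≤ j then -1 else 0) := by
  have ht := t.isLt
  have key : ∀ k : Fin (2*m+1), rt m i j k * (MA m).c t k =
      (if k.val = t.val - 1 then (if i + 1 ≤ t.val ∧ t.val ≤ j + 1 then (-1:ℝ) else 0) else 0)
      + (if k.val = t.val then (if i ≤ t.val ∧ t.val ≤ j then 2 else 0) else 0)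
      + (if k.val = t.val + 1 then (if i ≤ t.val + 1 ∧ t.val + 1 ≤ j then -1 else 0) else 0) := by
    intro k
    have hk := k.isLt
    rw [rt_apply, c_eval]
    simp only [Fin.ext_iff]
    split_ifs <;> first | omega | norm_num
  rw [bform_sroot, Finset.sum_congr rfl (fun k _ => key k),
    Finset.sum_add_distrib, Finset.sum_add_distrib, sum_ite_fin, sum_ite_fin, sum_ite_fin]
  split_ifs <;> first | omega | norm_num
lemma sigma_apply (t : Fin (2*m+1)) (x : Fin (2*m+1) →₀ ℝ) :
    (MA m).sigma t x = x - ((MA m).bform (CoxeterMat.sroot t) x) • CoxeterMat.sroot t := by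
  simp [CoxeterMat.sigma]

lemma rt_sroot (t : Fin (2*m+1)) : rt m t.val t.val = CoxeterMat.sroot t := by
  ext k
  rw [rt_apply, CoxeterMat.sroot, Finsupp.single_apply]
  split_ifs with h1 h2 h2 <;> first | rfl | (exfalso; rw [Fin.ext_iff] at *; omega)

lemma bform_diag (t : Fin (2*m+1)) :
    (MA m).bform (CoxeterMat.sroot t) (CoxeterMat.sroot t) = 2 := by
  nth_rewrite 2 [← rt_sroot m t]
  rw [bform_rt m t t.val t.val (by omega)]
  split_ifs <;> first | omega | norm_num

lemma sigma_invol (t : Fin (2*m+1)) (x : Fin (2*m+1) →₀ ℝ) :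
    (MA m).sigma t ((MA m).sigma t x) = x := by
  rw [sigma_apply, sigma_apply, map_sub, map_smul, bform_diag]
  set B := (MA m).bform (CoxeterMat.sroot t) x
  rw [smul_eq_mul]
  module

noncomputable def sigE (m : ℕ) (t : Fin (2*m+1)) :
    (Fin (2*m+1) →₀ ℝ) ≃ₗ[ℝ] (Fin (2*m+1) →₀ ℝ) :=
  LinearEquiv.ofLinear ((MA m).sigma t) ((MA m).sigma t)
    (LinearMap.ext fun x => by simpa using sigma_invol m t x)
    (LinearMap.ext fun x => by simpa using sigma_invol m t x)

lemma sigE_apply (t : Fin (2*m+1)) (x : Fin (2*m+1) →₀ ℝ) :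
    sigE m t x = (MA m).sigma t x := rfl

lemma sigE_mem (t : Fin (2*m+1)) : sigE m t ∈ (MA m).Wgrp :=
  Subgroup.subset_closure ⟨t, rfl⟩

lemma sigE_sq (t : Fin (2*m+1)) : sigE m t * sigE m t = 1 := by
  apply LinearEquiv.toLinearMap_injective
  apply LinearMap.ext
  intro x
  simpa [sigE_apply] using sigma_invol m t x

lemma sigE_inv (t : Fin (2*m+1)) : (sigE m t)⁻¹ = sigE m t := by
  rw [eq_comm, eq_inv_iff_mul_eq_one, sigE_sq]
lemma act_triv (t : Fin (2*m+1)) (i j : ℕ) (hj : j ≤ 2*m)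
    (h : t.val + 2 ≤ i ∨ (i + 1 ≤ t.val ∧ t.val + 1 ≤ j) ∨ j + 2 ≤ t.val) :
    (MA m).sigma t (rt m i j) = rt m i j := by
  have hB : (MA m).bform (CoxeterMat.sroot t) (rt m i j) = 0 := by
    rw [bform_rt m t i j hj]; split_ifs <;> first | omega | norm_num
  rw [sigma_apply, hB]; simp

lemma act_ext_right (t : Fin (2*m+1)) (i j : ℕ) (hij : i ≤ j) (ht : t.val = j + 1)
    (hj : j + 1 ≤ 2*m) :
    (MA m).sigma t (rt m i j) = rt m i (j+1) := by
  have hB : (MA m).bform (CoxeterMat.sroot t) (rt m i j) = -1 := by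
    rw [bform_rt m t i j (by omega)]; split_ifs <;> first | omega | norm_num
  rw [sigma_apply, hB]
  ext k
  simp only [Finsupp.sub_apply, Finsupp.smul_apply, rt_apply, CoxeterMat.sroot,
    Finsupp.single_apply, Fin.ext_iff, smul_eq_mul]
  split_ifs <;> first | omega | norm_num

lemma act_ext_left (t : Fin (2*m+1)) (i j : ℕ) (hij : i ≤ j) (ht : t.val + 1 = i)
    (hj : j ≤ 2*m) :
    (MA m).sigma t (rt m i j) = rt m t.val j := by
  have hB : (MA m).bform (CoxeterMat.sroot t) (rt m i j) = -1 := by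
    rw [bform_rt m t i j hj]; split_ifs <;> first | omega | norm_num
  rw [sigma_apply, hB]
  ext k
  simp only [Finsupp.sub_apply, Finsupp.smul_apply, rt_apply, CoxeterMat.sroot,
    Finsupp.single_apply, Fin.ext_iff, smul_eq_mul]
  split_ifs <;> first | omega | norm_num

lemma act_shrink_left (t : Fin (2*m+1)) (i j : ℕ) (hij : i < j) (ht : t.val = i)
    (hj : j ≤ 2*m) :
    (MA m).sigma t (rt m i j) = rt m (i+1) j := by
  have hB : (MA m).bform (CoxeterMat.sroot t) (rt m i j) = 1 := by
    rw [bform_rt m t i j hj]; split_ifs <;> first | omega | norm_num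
  rw [sigma_apply, hB]
  ext k
  simp only [Finsupp.sub_apply, Finsupp.smul_apply, rt_apply, CoxeterMat.sroot,
    Finsupp.single_apply, Fin.ext_iff, smul_eq_mul]
  split_ifs <;> first | omega | norm_num

lemma act_shrink_right (t : Fin (2*m+1)) (i j : ℕ) (hij : i < j) (ht : t.val = j)
    (hj : j ≤ 2*m) :
    (MA m).sigma t (rt m i j) = rt m i (j-1) := by
  have hB : (MA m).bform (CoxeterMat.sroot t) (rt m i j) = 1 := by
    rw [bform_rt m t i j hj]; split_ifs <;> first | omega | norm_num
  rw [sigma_apply, hB]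
  ext k
  simp only [Finsupp.sub_apply, Finsupp.smul_apply, rt_apply, CoxeterMat.sroot,
    Finsupp.single_apply, Fin.ext_iff, smul_eq_mul]
  split_ifs <;> first | omega | norm_num

lemma act_neg (t : Fin (2*m+1)) (i : ℕ) (ht : t.val = i) (hj : i ≤ 2*m) :
    (MA m).sigma t (rt m i i) = -rt m i i := by
  have hB : (MA m).bform (CoxeterMat.sroot t) (rt m i i) = 2 := by
    rw [bform_rt m t i i hj]; split_ifs <;> first | omega | norm_num
  rw [sigma_apply, hB]
  ext k
  simp only [Finsupp.sub_apply, Finsupp.smul_apply, rt_apply, CoxeterMat.sroot,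
    Finsupp.single_apply, Fin.ext_iff, smul_eq_mul, Finsupp.neg_apply]
  split_ifs <;> first | omega | norm_num
lemma permV_apply {S : Type*} (g : Equiv.Perm S) (x : S →₀ ℝ) (k : S) :
    (CoxeterMat.permV g x : S →₀ ℝ) k = x (g.symm k) := by
  simp [CoxeterMat.permV, Finsupp.domLCongr_apply, Finsupp.domCongr_apply,
    Finsupp.equivMapDomain_apply]

lemma permV_mul {S : Type*} (g h : Equiv.Perm S) :
    (CoxeterMat.permV (g * h) : (S →₀ ℝ) ≃ₗ[ℝ] (S →₀ ℝ)) =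
      CoxeterMat.permV g * CoxeterMat.permV h := by
  show Finsupp.domLCongr _ = _
  rw [show (g * h : Equiv.Perm S) = h.trans g from rfl, ← Finsupp.domLCongr_trans]
  rfl

lemma permV_one {S : Type*} :
    (CoxeterMat.permV (1 : Equiv.Perm S) : (S →₀ ℝ) ≃ₗ[ℝ] (S →₀ ℝ)) = 1 := by
  show Finsupp.domLCongr _ = _
  rw [show (1 : Equiv.Perm S) = Equiv.refl S from rfl, Finsupp.domLCongr_refl]
  rfl

lemma permV_inv {S : Type*} (g : Equiv.Perm S) :
    (CoxeterMat.permV g⁻¹ : (S →₀ ℝ) ≃ₗ[ℝ] (S →₀ ℝ)) = (CoxeterMat.permV g)⁻¹ := by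
  rw [eq_inv_iff_mul_eq_one, ← permV_mul, inv_mul_cancel, permV_one]

lemma rev_val (k : Fin (2*m+1)) : (Fin.revPerm k).val = 2*m - k.val := by
  have := k.isLt
  show (Fin.rev k).val = _
  rw [Fin.val_rev]
  omega

lemma c_rev (s k : Fin (2*m+1)) :
    (MA m).c (Fin.revPerm s) (Fin.revPerm k) = (MA m).c s k := by
  have hs := s.isLt; have hk := k.isLt
  rw [c_eval, c_eval]
  simp only [Fin.ext_iff, rev_val]
  split_ifs <;> first | rfl | omega

lemma permV_sroot (s : Fin (2*m+1)) :
    CoxeterMat.permV (Fin.revPerm : Equiv.Perm (Fin (2*m+1))) (CoxeterMat.sroot s)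
      = CoxeterMat.sroot (Fin.revPerm s) := by
  ext k
  rw [permV_apply, CoxeterMat.sroot, CoxeterMat.sroot, Finsupp.single_apply,
    Finsupp.single_apply, Fin.revPerm_symm]
  have : s = Fin.revPerm k ↔ Fin.revPerm s = k := by
    constructor
    · rintro rfl; exact Fin.rev_rev k
    · rintro rfl; exact (Fin.rev_rev s).symm
  split_ifs with h1 h2 h2 <;> first | rfl | (exfalso; tauto)

lemma bform_rev (s : Fin (2*m+1)) (x : Fin (2*m+1) →₀ ℝ) :
    (MA m).bform (CoxeterMat.sroot (Fin.revPerm s))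
      (CoxeterMat.permV (Fin.revPerm : Equiv.Perm (Fin (2*m+1))) x)
      = (MA m).bform (CoxeterMat.sroot s) x := by
  rw [bform_sroot, bform_sroot]
  rw [← Equiv.sum_comp (Fin.revPerm : Equiv.Perm (Fin (2*m+1)))
    (fun k => (CoxeterMat.permV (Fin.revPerm : Equiv.Perm (Fin (2*m+1))) x) k * (MA m).c (Fin.revPerm s) k)]
  apply Finset.sum_congr rfl
  intro k _
  rw [permV_apply, Fin.revPerm_symm, c_rev]
  simp [Fin.rev_rev]

lemma permV_sigma_comm (s : Fin (2*m+1)) (x : Fin (2*m+1) →₀ ℝ) :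
    CoxeterMat.permV (Fin.revPerm : Equiv.Perm (Fin (2*m+1))) ((MA m).sigma s x)
      = (MA m).sigma (Fin.revPerm s)
          (CoxeterMat.permV (Fin.revPerm : Equiv.Perm (Fin (2*m+1))) x) := by
  rw [sigma_apply, sigma_apply, map_sub, map_smul, permV_sroot, bform_rev]
lemma bform_sroot_sroot (a b : Fin (2*m+1)) :
    (MA m).bform (CoxeterMat.sroot a) (CoxeterMat.sroot b) = (MA m).c a b := by
  rw [bform_sroot]
  rw [Finset.sum_eq_single b]
  · simp [CoxeterMat.sroot]
  · intro l _ hl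
    rw [CoxeterMat.sroot, Finsupp.single_apply, if_neg (fun h => hl (h.symm)), zero_mul]
  · simp

lemma sigE_commute (a b : Fin (2*m+1)) (h : a.val + 2 ≤ b.val ∨ b.val + 2 ≤ a.val) :
    Commute (sigE m a) (sigE m b) := by
  have hab : (MA m).bform (CoxeterMat.sroot a) (CoxeterMat.sroot b) = 0 := by
    rw [bform_sroot_sroot, c_eval]; split_ifs <;> first | omega | rfl | (exfalso; omega)
  have hba : (MA m).bform (CoxeterMat.sroot b) (CoxeterMat.sroot a) = 0 := by
    rw [bform_sroot_sroot, c_eval]; split_ifs <;> first | omega | rfl | (exfalso; omega)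
  apply LinearEquiv.toLinearMap_injective
  apply LinearMap.ext
  intro x
  show sigE m a (sigE m b x) = sigE m b (sigE m a x)
  simp only [sigE_apply, sigma_apply, map_sub, map_smul, hab, hba, smul_eq_mul, mul_zero,
    sub_zero, smul_zero]
  module

lemma sigE_rev_comm (t : Fin (2*m+1)) :
    CoxeterMat.permV (Fin.revPerm : Equiv.Perm (Fin (2*m+1))) * sigE m t
      = sigE m (Fin.revPerm t) * CoxeterMat.permV Fin.revPerm := by
  apply LinearEquiv.toLinearMap_injective
  apply LinearMap.ext
  intro x
  show CoxeterMat.permV Fin.revPerm (sigE m t x) = sigE m (Fin.revPerm t) (CoxeterMat.permV Fin.revPerm x)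
  simp only [sigE_apply]
  exact permV_sigma_comm m t x

noncomputable abbrev Wfx (m : ℕ) : Set ((Fin (2*m+1) →₀ ℝ) ≃ₗ[ℝ] (Fin (2*m+1) →₀ ℝ)) :=
  (MA m).WfixG (Subgroup.closure {(Fin.revPerm : Equiv.Perm (Fin (2*m+1)))})

lemma Wfx_of_commute (w : (Fin (2*m+1) →₀ ℝ) ≃ₗ[ℝ] (Fin (2*m+1) →₀ ℝ))
    (hW : w ∈ (MA m).Wgrp)
    (hc : CoxeterMat.permV (Fin.revPerm : Equiv.Perm (Fin (2*m+1))) * w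
        = w * CoxeterMat.permV Fin.revPerm) :
    w ∈ Wfx m := by
  refine ⟨hW, ?_⟩
  intro g hg
  induction hg using Subgroup.closure_induction with
  | mem x hx => rw [Set.mem_singleton_iff] at hx; subst hx; exact hc
  | one => rw [permV_one]; group
  | mul a b _ _ ha hb =>
      rw [permV_mul]
      calc CoxeterMat.permV a * CoxeterMat.permV b * w
          = CoxeterMat.permV a * (CoxeterMat.permV b * w) := by group
        _ = CoxeterMat.permV a * w * CoxeterMat.permV b := by rw [hb]; group
        _ = w * (CoxeterMat.permV a * CoxeterMat.permV b) := by rw [ha]; group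
  | inv a _ ha =>
      rw [permV_inv]
      have : Commute w (CoxeterMat.permV a) := (ha).symm
      exact (this.inv_right).symm

lemma Wfx_one : (1 : (Fin (2*m+1) →₀ ℝ) ≃ₗ[ℝ] (Fin (2*m+1) →₀ ℝ)) ∈ Wfx m := by
  refine ⟨Subgroup.one_mem _, ?_⟩
  intro g _; group

lemma Wfx_mul {u v : (Fin (2*m+1) →₀ ℝ) ≃ₗ[ℝ] (Fin (2*m+1) →₀ ℝ)}
    (hu : u ∈ Wfx m) (hv : v ∈ Wfx m) : u * v ∈ Wfx m := by
  refine ⟨Subgroup.mul_mem _ hu.1 hv.1, ?_⟩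
  intro g hg
  calc CoxeterMat.permV g * (u * v) = (CoxeterMat.permV g * u) * v := by group
    _ = u * (CoxeterMat.permV g * v) := by rw [hu.2 g hg]; group
    _ = u * v * CoxeterMat.permV g := by rw [hv.2 g hg]; group
lemma mulE_apply (u v : (Fin (2*m+1) →₀ ℝ) ≃ₗ[ℝ] (Fin (2*m+1) →₀ ℝ)) (x : Fin (2*m+1) →₀ ℝ) :
    (u * v) x = u (v x) := rfl

lemma revPerm_mk (k : ℕ) (hk : k < 2*m+1) :
    (Fin.revPerm : Equiv.Perm (Fin (2*m+1))) ⟨k, hk⟩ = ⟨2*m-k, by omega⟩ := by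
  apply Fin.ext
  rw [rev_val]

lemma sigEm_mem : sigE m ⟨m, by omega⟩ ∈ Wfx m := by
  apply Wfx_of_commute m _ (sigE_mem m _)
  have h : (Fin.revPerm (⟨m, by omega⟩ : Fin (2*m+1))) = ⟨m, by omega⟩ := by
    rw [revPerm_mk]; apply Fin.ext; show 2*m-m = m; omega
  rw [sigE_rev_comm, h]

noncomputable def vE (m k : ℕ) (hk : k < m) :
    (Fin (2*m+1) →₀ ℝ) ≃ₗ[ℝ] (Fin (2*m+1) →₀ ℝ) :=
  sigE m ⟨k, by omega⟩ * sigE m ⟨2*m-k, by omega⟩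

lemma vE_mem (k : ℕ) (hk : k < m) : vE m k hk ∈ Wfx m := by
  apply Wfx_of_commute m _ (Subgroup.mul_mem _ (sigE_mem m _) (sigE_mem m _))
  have hcom : Commute (sigE m (⟨k, by omega⟩ : Fin (2*m+1))) (sigE m ⟨2*m-k, by omega⟩) :=
    sigE_commute m _ _ (by simp only []; omega)
  calc CoxeterMat.permV Fin.revPerm * (sigE m ⟨k, by omega⟩ * sigE m ⟨2*m-k, by omega⟩)
      = (CoxeterMat.permV Fin.revPerm * sigE m ⟨k, by omega⟩) * sigE m ⟨2*m-k, by omega⟩ := by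
        group
    _ = sigE m ⟨2*m-k, by omega⟩ * (CoxeterMat.permV Fin.revPerm * sigE m ⟨2*m-k, by omega⟩) := by
        rw [sigE_rev_comm, revPerm_mk]
        group
    _ = sigE m ⟨2*m-k, by omega⟩ * (sigE m ⟨k, by omega⟩ * CoxeterMat.permV Fin.revPerm) := by
        have h2 : (Fin.revPerm (⟨2*m-k, by omega⟩ : Fin (2*m+1))) = ⟨k, by omega⟩ := by
          rw [revPerm_mk]; apply Fin.ext; show 2*m-(2*m-k) = k; omega
        rw [sigE_rev_comm, h2]
    _ = (sigE m ⟨k, by omega⟩ * sigE m ⟨2*m-k, by omega⟩) * CoxeterMat.permV Fin.revPerm := by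
        rw [← mul_assoc, ← hcom.eq, mul_assoc]

lemma vE_apply (k : ℕ) (hk : k < m) (x : Fin (2*m+1) →₀ ℝ) :
    vE m k hk x = (MA m).sigma ⟨k, by omega⟩ ((MA m).sigma ⟨2*m-k, by omega⟩ x) := rfl

/-- orbit of `α_c` under the fixed subgroup -/
def Orb (m c : ℕ) (hc : c < 2*m+1) : Set (Fin (2*m+1) →₀ ℝ) :=
  {x | ∃ w ∈ Wfx m, x = w (CoxeterMat.sroot (⟨c, hc⟩ : Fin (2*m+1)))}

lemma orb_base (c : ℕ) (hc : c < 2*m+1) :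
    CoxeterMat.sroot (⟨c, hc⟩ : Fin (2*m+1)) ∈ Orb m c hc :=
  ⟨1, Wfx_one m, rfl⟩

lemma orb_step {c : ℕ} {hc : c < 2*m+1} {x : Fin (2*m+1) →₀ ℝ}
    (hx : x ∈ Orb m c hc) {u : (Fin (2*m+1) →₀ ℝ) ≃ₗ[ℝ] (Fin (2*m+1) →₀ ℝ)}
    (hu : u ∈ Wfx m) : u x ∈ Orb m c hc := by
  obtain ⟨w, hw, rfl⟩ := hx
  exact ⟨u * w, Wfx_mul m hu hw, (mulE_apply m u w _)⟩
lemma sroot_as_rt (c : ℕ) (hc : c < 2*m+1) :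
    CoxeterMat.sroot (⟨c, hc⟩ : Fin (2*m+1)) = rt m c c :=
  (rt_sroot m ⟨c, hc⟩).symm

lemma neg_orb_m {x : Fin (2*m+1) →₀ ℝ} (hx : x ∈ Orb m m (by omega)) :
    -x ∈ Orb m m (by omega) := by
  obtain ⟨w, hw, rfl⟩ := hx
  refine ⟨w * sigE m ⟨m, by omega⟩, Wfx_mul m hw (sigEm_mem m), ?_⟩
  rw [mulE_apply, sigE_apply, sroot_as_rt,
    act_neg m ⟨m, by omega⟩ m rfl (by omega), map_neg]

lemma neg_orb_m1 (hm : 1 ≤ m) {x : Fin (2*m+1) →₀ ℝ}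
    (hx : x ∈ Orb m (m-1) (hm1 m)) : -x ∈ Orb m (m-1) (hm1 m) := by
  obtain ⟨w, hw, rfl⟩ := hx
  refine ⟨w * vE m (m-1) (by omega), Wfx_mul m hw (vE_mem m (m-1) (by omega)), ?_⟩
  rw [mulE_apply, vE_apply, sroot_as_rt,
    act_triv m ⟨2*m-(m-1), by omega⟩ (m-1) (m-1) (by omega) (by right; right; show m-1+2 ≤ 2*m-(m-1); omega),
    act_neg m ⟨m-1, by omega⟩ (m-1) rfl (by omega), map_neg]

lemma fixed_in_orb_m : ∀ d, d ≤ m → rt m (m-d) (m+d) ∈ Orb m m (by omega) := by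
  intro d
  induction d with
  | zero => intro _; rw [show m - 0 = m from rfl, show m + 0 = m from rfl, ← sroot_as_rt]
            exact orb_base m m (by omega)
  | succ d ih =>
      intro hd
      have h0 := ih (by omega)
      have h1 := orb_step m h0 (vE_mem m (m-d-1) (by omega))
      rw [vE_apply,
        act_ext_right m ⟨2*m-(m-d-1), by omega⟩ (m-d) (m+d) (by omega) (by show 2*m-(m-d-1) = (m+d)+1; omega) (by omega),
        act_ext_left m ⟨m-d-1, by omega⟩ (m-d) (m+d+1) (by omega) (by show (m-d-1)+1 = m-d; omega) (by omega)] at h1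
      have e1 : m - (d+1) = m-d-1 := by omega
      have e2 : m + (d+1) = m+d+1 := by omega
      rw [e1, e2]
      exact h1
lemma sroot_left_in_orb_m1 (hm : 1 ≤ m) :
    ∀ d, d ≤ m-1 → rt m (m-1-d) (m-1-d) ∈ Orb m (m-1) (hm1 m) := by
  intro d
  induction d with
  | zero => intro _; rw [show m-1-0 = m-1 from rfl, ← sroot_as_rt]
            exact orb_base m (m-1) (by omega)
  | succ d ih =>
      intro hd
      have h0 := ih (by omega)
      have h1 := orb_step m h0 (vE_mem m (m-1-(d+1)) (by omega))
      rw [vE_apply,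
        act_triv m ⟨2*m-(m-1-(d+1)), by omega⟩ (m-1-d) (m-1-d) (by omega)
          (by right; right; show (m-1-d)+2 ≤ 2*m-(m-1-(d+1)); omega),
        act_ext_left m ⟨m-1-(d+1), by omega⟩ (m-1-d) (m-1-d) (le_refl _)
          (by show (m-1-(d+1))+1 = m-1-d; omega) (by omega)] at h1
      have h2 := orb_step m h1 (vE_mem m (m-1-d) (by omega))
      rw [vE_apply,
        act_triv m ⟨2*m-(m-1-d), by omega⟩ (m-1-(d+1)) (m-1-d) (by omega)
          (by right; right; show (m-1-d)+2 ≤ 2*m-(m-1-d); omega),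
        act_shrink_right m ⟨m-1-d, by omega⟩ (m-1-(d+1)) (m-1-d) (by omega) rfl (by omega)] at h2
      have e : m-1-d-1 = m-1-(d+1) := by omega
      rw [e] at h2
      exact h2

lemma sroot_in_orb_m1 (hm : 1 ≤ m) (i : ℕ) (hi : i ≤ m-1) :
    rt m i i ∈ Orb m (m-1) (hm1 m) := by
  have := sroot_left_in_orb_m1 m hm (m-1-i) (by omega)
  rw [show m-1-(m-1-i) = i by omega] at this
  exact this

lemma low_in_orb_m1 (hm : 1 ≤ m) :
    ∀ j i, i ≤ j → i + j < 2*m → rt m i j ∈ Orb m (m-1) (hm1 m) := by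
  intro j
  induction j with
  | zero => intro i h1 h2
            have : i = 0 := by omega
            subst this
            exact sroot_in_orb_m1 m hm 0 (by omega)
  | succ j ih =>
      intro i h1 h2
      by_cases hij : i = j + 1
      · rw [hij]
        exact sroot_in_orb_m1 m hm (j+1) (by omega)
      · have hi_le : i ≤ j := by omega
        have hj0 := ih i hi_le (by omega)
        rcases lt_trichotomy (j+1) m with hA | hA | hA
        · -- j+1 ≤ m-1 : use vE (j+1)
          have h1' := orb_step m hj0 (vE_mem m (j+1) (by omega))
          rw [vE_apply,
            act_triv m ⟨2*m-(j+1), by omega⟩ i j (by omega)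
              (by right; right; show j+2 ≤ 2*m-(j+1); omega),
            act_ext_right m ⟨j+1, by omega⟩ i j hi_le rfl (by omega)] at h1'
          exact h1'
        · -- j+1 = m : use sigE m
          have h1' := orb_step m hj0 (sigEm_mem m)
          rw [sigE_apply,
            act_ext_right m ⟨m, by omega⟩ i j hi_le (by show m = j+1; omega) (by omega)] at h1'
          exact h1'
        · -- j+1 > m : use vE (2m-j-1)
          have h1' := orb_step m hj0 (vE_mem m (2*m-j-1) (by omega))
          rw [vE_apply,
            act_ext_right m ⟨2*m-(2*m-j-1), by omega⟩ i j hi_le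
              (by show 2*m-(2*m-j-1) = j+1; omega) (by omega),
            act_triv m ⟨2*m-j-1, by omega⟩ i (j+1) (by omega)
              (by
                right; left
                constructor
                · show i+1 ≤ 2*m-j-1
                  omega
                · show (2*m-j-1)+1 ≤ j+1
                  omega)] at h1'
          exact h1'
lemma permV_rt (i j : ℕ) (hij : i ≤ j) (hj : j ≤ 2*m) :
    CoxeterMat.permV (Fin.revPerm : Equiv.Perm (Fin (2*m+1))) (rt m i j)
      = rt m (2*m-j) (2*m-i) := by
  ext k
  rw [permV_apply, Fin.revPerm_symm, rt_apply, rt_apply]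
  have hk := k.isLt
  rw [rev_val]
  split_ifs <;> first | rfl | omega

lemma alpha_top_in_orb_m1 (hm : 1 ≤ m) : rt m (m+1) (m+1) ∈ Orb m (m-1) (hm1 m) := by
  have h0 : rt m (m-1) (m-1) ∈ Orb m (m-1) (hm1 m) := by
    rw [← sroot_as_rt]; exact orb_base m (m-1) (by omega)
  have h1 := orb_step m h0 (sigEm_mem m)
  rw [sigE_apply,
    act_ext_right m ⟨m, by omega⟩ (m-1) (m-1) le_rfl (by show m = (m-1)+1; omega) (by omega)] at h1
  have h2 := orb_step m h1 (vE_mem m (m-1) (by omega))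
  rw [vE_apply,
    act_ext_right m ⟨2*m-(m-1), by omega⟩ (m-1) ((m-1)+1) (by omega)
      (by show 2*m-(m-1) = ((m-1)+1)+1; omega) (by omega),
    act_shrink_left m ⟨m-1, by omega⟩ (m-1) (((m-1)+1)+1) (by omega) rfl (by omega)] at h2
  have h3 := orb_step m h2 (sigEm_mem m)
  rw [show (m-1)+1 = m by omega,
    sigE_apply,
    act_shrink_left m ⟨m, by omega⟩ m (m+1) (by omega) rfl (by omega)] at h3
  exact h3

lemma mirror_orb_m1 (hm : 1 ≤ m) {x : Fin (2*m+1) →₀ ℝ}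
    (hx : x ∈ Orb m (m-1) (hm1 m)) :
    CoxeterMat.permV (Fin.revPerm : Equiv.Perm (Fin (2*m+1))) x ∈ Orb m (m-1) (hm1 m) := by
  obtain ⟨w, hw, rfl⟩ := hx
  have hc := hw.2 Fin.revPerm (Subgroup.subset_closure (Set.mem_singleton _))
  have key : CoxeterMat.permV (Fin.revPerm : Equiv.Perm (Fin (2*m+1)))
      (w (CoxeterMat.sroot ⟨m-1, by omega⟩))
      = w (CoxeterMat.permV Fin.revPerm (CoxeterMat.sroot (⟨m-1, by omega⟩ : Fin (2*m+1)))) := by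
    rw [← mulE_apply, ← mulE_apply, hc]
  have hfin : (⟨2*m-(m-1), by omega⟩ : Fin (2*m+1)) = ⟨m+1, by omega⟩ := by
    apply Fin.ext; show 2*m-(m-1) = m+1; omega
  rw [key, permV_sroot, revPerm_mk, hfin, sroot_as_rt]
  exact orb_step m (alpha_top_in_orb_m1 m hm) hw

lemma high_in_orb_m1 (hm : 1 ≤ m) (i j : ℕ) (hij : i ≤ j) (hj : j ≤ 2*m)
    (hs : 2*m < i + j) : rt m i j ∈ Orb m (m-1) (hm1 m) := by
  have h0 := low_in_orb_m1 m hm (2*m-i) (2*m-j) (by omega) (by omega)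
  have h1 := mirror_orb_m1 m hm h0
  rw [permV_rt m (2*m-j) (2*m-i) (by omega) (by omega),
    show 2*m-(2*m-i) = i by omega, show 2*m-(2*m-j) = j by omega] at h1
  exact h1
def Rset (m : ℕ) : Set (Fin (2*m+1) →₀ ℝ) :=
  {x | ∃ i j, i ≤ j ∧ j ≤ 2*m ∧ (x = rt m i j ∨ x = -rt m i j)}

lemma Rset_neg {x : Fin (2*m+1) →₀ ℝ} (hx : x ∈ Rset m) : -x ∈ Rset m := by
  obtain ⟨i, j, hij, hj, h | h⟩ := hx
  · exact ⟨i, j, hij, hj, Or.inr (by rw [h])⟩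
  · exact ⟨i, j, hij, hj, Or.inl (by rw [h, neg_neg])⟩

lemma sigma_rt_Rset (s : Fin (2*m+1)) (i j : ℕ) (hij : i ≤ j) (hj : j ≤ 2*m) :
    (MA m).sigma s (rt m i j) ∈ Rset m := by
  have hs := s.isLt
  by_cases h1 : s.val + 1 = i
  · exact ⟨s.val, j, by omega, hj, Or.inl (act_ext_left m s i j hij h1 hj)⟩
  by_cases h2 : s.val = j + 1
  · exact ⟨i, j+1, by omega, by omega, Or.inl (act_ext_right m s i j hij h2 (by omega))⟩
  by_cases h3 : s.val = i ∧ i = j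
  · refine ⟨i, j, hij, hj, Or.inr ?_⟩
    rw [← h3.2] at *
    rw [act_neg m s i h3.1 (by omega)]
  by_cases h4 : s.val = i ∧ i < j
  · exact ⟨i+1, j, by omega, hj, Or.inl (act_shrink_left m s i j h4.2 h4.1 hj)⟩
  by_cases h5 : s.val = j ∧ i < j
  · exact ⟨i, j-1, by omega, by omega, Or.inl (act_shrink_right m s i j h5.2 h5.1 hj)⟩
  · exact ⟨i, j, hij, hj, Or.inl (act_triv m s i j hj (by omega))⟩

lemma sigma_Rset (s : Fin (2*m+1)) {x : Fin (2*m+1) →₀ ℝ} (hx : x ∈ Rset m) :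
    (MA m).sigma s x ∈ Rset m := by
  obtain ⟨i, j, hij, hj, h | h⟩ := hx
  · rw [h]; exact sigma_rt_Rset m s i j hij hj
  · rw [h, map_neg]
    exact Rset_neg m (sigma_rt_Rset m s i j hij hj)

lemma W_Rset {w : (Fin (2*m+1) →₀ ℝ) ≃ₗ[ℝ] (Fin (2*m+1) →₀ ℝ)} (hw : w ∈ (MA m).Wgrp) :
    ∀ x ∈ Rset m, w x ∈ Rset m := by
  have main : (∀ x ∈ Rset m, w x ∈ Rset m) ∧ (∀ x ∈ Rset m, w⁻¹ x ∈ Rset m) := by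
    induction hw using Subgroup.closure_induction with
    | mem u hu =>
        obtain ⟨s, hcoe⟩ := hu
        have happ : ∀ x, u x = (MA m).sigma s x := fun x => by
          rw [← LinearEquiv.coe_coe, hcoe]
        have hsq : u * u = 1 := by
          apply LinearEquiv.toLinearMap_injective
          apply LinearMap.ext
          intro x
          show u (u x) = x
          rw [happ, happ]
          exact sigma_invol m s x
        have hinv : u⁻¹ = u := inv_eq_of_mul_eq_one_right hsq
        constructor
        · intro x hx; rw [happ]; exact sigma_Rset m s hx
        · intro x hx; rw [hinv, happ]; exact sigma_Rset m s hx
    | one => constructor <;> simp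
    | mul a b _ _ ha hb =>
        constructor
        · intro x hx
          rw [mulE_apply]
          exact ha.1 _ (hb.1 _ hx)
        · intro x hx
          rw [mul_inv_rev, mulE_apply]
          exact hb.2 _ (ha.2 _ hx)
    | inv a _ ha =>
        refine ⟨ha.2, ?_⟩
        intro x hx
        rw [inv_inv]
        exact ha.1 _ hx
  exact main.1

lemma Phi_sub_Rset {x : Fin (2*m+1) →₀ ℝ} (hx : x ∈ (MA m).Phi) : x ∈ Rset m := by
  obtain ⟨w, hw, s, rfl⟩ := hx
  apply W_Rset m hw
  exact ⟨s.val, s.val, le_rfl, by have := s.isLt; omega, Or.inl (rt_sroot m s).symm⟩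
end Dev
/-- For `W` of type `A_{2m+1}` (`m ≥ 1`, vertices `0, …, 2m` corresponding to
`s_1, …, s_{2m+1}`) and `g` the order-2 symmetry reversing the path, every root lies in the
`W^g`-orbit of `α_m` or `α_{m+1}` (indices `m-1` and `m`). -/
theorem stmt15 (m : ℕ) (hm : 1 ≤ m) :
    (pathA (2 * m + 1)).Phi =
      {x | ∃ w ∈ (pathA (2 * m + 1)).WfixG
          (Subgroup.closure {(Fin.revPerm : Equiv.Perm (Fin (2 * m + 1)))}),
        x = w (sroot (⟨m - 1, by omega⟩ : Fin (2 * m + 1)))} ∪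
      {x | ∃ w ∈ (pathA (2 * m + 1)).WfixG
          (Subgroup.closure {(Fin.revPerm : Equiv.Perm (Fin (2 * m + 1)))}),
        x = w (sroot (⟨m, by omega⟩ : Fin (2 * m + 1)))} := by
  apply Set.Subset.antisymm
  · intro x hx
    have hR := Phi_sub_Rset m hx
    obtain ⟨i, j, hij, hj, hc⟩ := hR
    have main : ∀ i j, i ≤ j → j ≤ 2*m →
        rt m i j ∈ Orb m (m-1) (hm1 m) ∨ rt m i j ∈ Orb m m (by omega) := by
      intro i j hij hj
      rcases lt_trichotomy (i+j) (2*m) with h | h | h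
      · exact Or.inl (low_in_orb_m1 m hm j i hij h)
      · right
        have := fixed_in_orb_m m (j-m) (by omega)
        rw [show m-(j-m) = i by omega, show m+(j-m) = j by omega] at this
        exact this
      · exact Or.inl (high_in_orb_m1 m hm i j hij hj h)
    rcases hc with h | h
    · rcases main i j hij hj with h2 | h2
      · left; rw [h]; exact h2
      · right; rw [h]; exact h2
    · rcases main i j hij hj with h2 | h2
      · left; rw [h]; exact neg_orb_m1 m hm h2
      · right; rw [h]; exact neg_orb_m m h2
  · rintro x (⟨w, hw, rfl⟩ | ⟨w, hw, rfl⟩) <;> exact ⟨w, hw.1, _, rfl⟩
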